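/- Let (g,J) be a quasi-Kähler Chern-flat Lie algebra of complex dimension 4 with J non-integrable. Then there exists a basis Z₁,Z₂,Z₃,Z₄ of g^{1,0} such that [Z₁,Z₂] = conj(Z₃) and all other brackets among the Zᵢ and their conjugates vanish. -/

import Mathlib

/-- Classification in complex dimension 4: let `L = g ⊗ ℂ` be the complexification
of a real Lie algebra `g` with almost complex structure `J`, presented abstractly
as a complex Lie algebra `L` with a conjugation `σ` (an involutive, antilinear,
bracket-preserving real-linear map) and complementary complex subspaces
`p = g^{1,0}`, `q = g^{0,1}` swapped by `σ`.  Assume the quasi-Kähler Chern-flat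
conditions `[p, q] = 0` and `[p, p] ⊆ q`, that `J` is non-integrable
(`[p, p] ≠ 0`) and that `dim_ℂ p = 4` (i.e. `dim_ℝ g = 8`).  Then there is a
basis `Z₀, Z₁, Z₂, Z₃` of `p` with `[Z₀, Z₁] = σ Z₂` and all other brackets among
the `Zᵢ` and their conjugates vanishing. -/
theorem qkcf_dim4_classification
    (L : Type*) [LieRing L] [LieAlgebra ℂ L] [Module ℝ L]
    [IsScalarTower ℝ ℂ L] [FiniteDimensional ℂ L]
    (σ : L →ₗ[ℝ] L)
    (hσσ : ∀ u : L, σ (σ u) = u)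
    (hσsmul : ∀ (c : ℂ) (u : L), σ (c • u) = (starRingEnd ℂ) c • σ u)
    (hσbr : ∀ u v : L, σ ⁅u, v⁆ = ⁅σ u, σ v⁆)
    (p q : Submodule ℂ L) (hpq : IsCompl p q)
    (hσp : ∀ u ∈ p, σ u ∈ q) (hσq : ∀ u ∈ q, σ u ∈ p)
    (hCF : ∀ u ∈ p, ∀ v ∈ q, ⁅u, v⁆ = (0 : L))
    (hQK : ∀ u ∈ p, ∀ v ∈ p, ⁅u, v⁆ ∈ q)
    (hdim : Module.finrank ℂ p = 4)
    (hnonint : ∃ u ∈ p, ∃ v ∈ p, ⁅u, v⁆ ≠ (0 : L)) :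
    ∃ Z : Fin 4 → L, (∀ i, Z i ∈ p) ∧ LinearIndependent ℂ Z ∧
      Submodule.span ℂ (Set.range Z) = p ∧
      ⁅Z 0, Z 1⁆ = σ (Z 2) ∧
      (∀ i j : Fin 4, (i, j) ≠ ((0 : Fin 4), (1 : Fin 4)) →
        (j, i) ≠ ((0 : Fin 4), (1 : Fin 4)) → ⁅Z i, Z j⁆ = 0) ∧
      (∀ i j : Fin 4, ⁅Z i, σ (Z j)⁆ = 0) := by
  classical
  obtain ⟨u, hu, v, hv, hc⟩ := hnonint
  set c : L := ⁅u, v⁆ with hcdef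
  have hcq : c ∈ q := hQK u hu v hv
  set w : L := σ c with hwdef
  have hwp : w ∈ p := hσq c hcq
  have hσw : σ w = c := hσσ c
  have hw0 : w ≠ 0 := by
    intro h
    exact hc (by rw [← hσw, h, map_zero])
  have hvu : ⁅v, u⁆ = -c := by rw [hcdef, ← lie_skew]
  -- conjugates of brackets are central in `p`
  have hradgen : ∀ x ∈ p, ∀ y ∈ p, ∀ z ∈ p, ⁅σ ⁅x, y⁆, z⁆ = 0 := by
    intro x hx y hy z hz
    rw [hσbr, lie_lie]
    have h1 : ⁅σ y, z⁆ = 0 := by rw [← lie_skew, hCF z hz (σ y) (hσp y hy), neg_zero]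
    have h2 : ⁅σ x, z⁆ = 0 := by rw [← lie_skew, hCF z hz (σ x) (hσp x hx), neg_zero]
    rw [h1, h2, lie_zero, lie_zero, sub_zero]
  have hwrad : ∀ z ∈ p, ⁅w, z⁆ = 0 := fun z hz => hradgen u hu v hv z hz
  have hzw : ∀ z ∈ p, ⁅z, w⁆ = 0 := by
    intro z hz; rw [← lie_skew, hwrad z hz, neg_zero]
  have hspan3 : ∀ t : L, t ∈ Submodule.span ℂ {u, v, w} →
      ∃ a b d : ℂ, t = a • u + (b • v + d • w) := by
    intro t ht
    rw [Submodule.mem_span_insert] at ht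
    obtain ⟨a, z, hz, rfl⟩ := ht
    rw [Submodule.mem_span_insert] at hz
    obtain ⟨b, z', hz', rfl⟩ := hz
    rw [Submodule.mem_span_singleton] at hz'
    obtain ⟨d, rfl⟩ := hz'
    exact ⟨a, b, d, rfl⟩
  by_cases hT : ∃ t ∈ p, (∀ y ∈ p, ⁅t, y⁆ = 0) ∧ t ∉ Submodule.span ℂ {u, v, w}
  · obtain ⟨t, htp, htrad, htns⟩ := hT
    have hzt : ∀ z ∈ p, ⁅z, t⁆ = 0 := by
      intro z hz; rw [← lie_skew, htrad z hz, neg_zero]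
    have hmem : ∀ i, (![u, v, w, t]) i ∈ p := by
      intro i; fin_cases i
      · exact hu
      · exact hv
      · exact hwp
      · exact htp
    have hli : LinearIndependent ℂ ![u, v, w, t] := by
      rw [Fintype.linearIndependent_iff]
      intro g hg
      rw [Fin.sum_univ_four] at hg
      simp only [Matrix.cons_val_zero, Matrix.cons_val_one, Matrix.head_cons,
        Matrix.cons_val_two, Matrix.tail_cons, Matrix.cons_val_three] at hg
      have h0 : g 0 = 0 := by
        have h := congrArg (fun z => ⁅z, v⁆) hg
        simp only [add_lie, smul_lie, lie_self, smul_zero, zero_lie, add_zero,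
          hwrad v hv, htrad v hv] at h
        rcases smul_eq_zero.mp h with h' | h'
        · exact h'
        · exact absurd h' hc
      have h1 : g 1 = 0 := by
        have h := congrArg (fun z => ⁅z, u⁆) hg
        simp only [add_lie, smul_lie, lie_self, smul_zero, zero_lie, add_zero, zero_add,
          hwrad u hu, htrad u hu, hvu, smul_neg] at h
        rcases neg_eq_zero.mp h with h'
        rcases smul_eq_zero.mp h' with h'' | h''
        · exact h''
        · exact absurd h'' hc
      have hg' : g 2 • w + g 3 • t = 0 := by
        rw [h0, h1] at hg
        simpa using hg
      have h3 : g 3 = 0 := by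
        by_contra h3
        apply htns
        have ht' : g 3 • t = (-(g 2)) • w := by
          rw [neg_smul]
          exact eq_neg_of_add_eq_zero_right hg'
        have : t = ((g 3)⁻¹ * (-(g 2))) • w := by
          rw [← smul_smul, ← ht', inv_smul_smul₀ h3]
        rw [this]
        exact Submodule.smul_mem _ _ (Submodule.subset_span (by simp))
      have h2 : g 2 = 0 := by
        rw [h3, zero_smul, add_zero] at hg'
        rcases smul_eq_zero.mp hg' with h' | h'
        · exact h'
        · exact absurd h' hw0
      intro i; fin_cases i
      · exact h0
      · exact h1
      · exact h2
      · exact h3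
    have hsple : Submodule.span ℂ (Set.range ![u, v, w, t]) ≤ p := by
      rw [Submodule.span_le]
      rintro z ⟨i, rfl⟩
      exact hmem i
    have hspfr : Module.finrank ℂ (Submodule.span ℂ (Set.range ![u, v, w, t])) = 4 := by
      rw [finrank_span_eq_card hli]
      simp
    have hspan : Submodule.span ℂ (Set.range ![u, v, w, t]) = p :=
      Submodule.eq_of_le_of_finrank_le hsple (le_of_eq (hdim.trans hspfr.symm))
    refine ⟨![u, v, w, t], hmem, hli, hspan, ?_, ?_, ?_⟩
    · show ⁅u, v⁆ = σ w
      rw [hσw]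
    · intro i j h1 h2
      fin_cases i <;> fin_cases j <;>
        first
          | exact absurd rfl h1
          | exact absurd rfl h2
          | exact lie_self _
          | exact hzw u hu
          | exact hzw v hv
          | exact hzt u hu
          | exact hzt v hv
          | exact hwrad u hu
          | exact hwrad v hv
          | exact hwrad t htp
          | exact htrad u hu
          | exact htrad v hv
          | exact htrad w hwp
    · intro i j
      exact hCF _ (hmem i) _ (hσp _ (hmem j))
  · push_neg at hT
    exfalso
    have hradw : ∀ t ∈ p, (∀ y ∈ p, ⁅t, y⁆ = 0) → ∃ d : ℂ, t = d • w := by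
      intro t htp htr
      obtain ⟨a, b, d, rfl⟩ := hspan3 t (hT t htp htr)
      have ha : a = 0 := by
        have h := htr v hv
        simp only [add_lie, smul_lie, lie_self, smul_zero, add_zero,
          hwrad v hv] at h
        rcases smul_eq_zero.mp h with h' | h'
        · exact h'
        · exact absurd h' hc
      have hb : b = 0 := by
        have h := htr u hu
        simp only [add_lie, smul_lie, lie_self, smul_zero, add_zero, zero_add,
          hwrad u hu, hvu, smul_neg] at h
        rcases smul_eq_zero.mp (neg_eq_zero.mp h) with h' | h'
        · exact h'
        · exact absurd h' hc
      exact ⟨d, by rw [ha, hb]; simp⟩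
    have hbrs : ∀ x ∈ p, ∀ y ∈ p, ∃ s : ℂ, ⁅x, y⁆ = s • c := by
      intro x hx y hy
      have hrp : σ ⁅x, y⁆ ∈ p := hσq _ (hQK x hx y hy)
      obtain ⟨d, hd⟩ := hradw _ hrp (fun z hz => hradgen x hx y hy z hz)
      refine ⟨(starRingEnd ℂ) d, ?_⟩
      have h := (hσσ ⁅x, y⁆).symm
      rw [h, hd, hσsmul, hσw]
    set K : Submodule ℂ L :=
      p ⊓ (LinearMap.ker (LieAlgebra.ad ℂ L u) ⊓ LinearMap.ker (LieAlgebra.ad ℂ L v))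
        with hKdef
    have hKmem : ∀ x : L, x ∈ K ↔ x ∈ p ∧ ⁅u, x⁆ = 0 ∧ ⁅v, x⁆ = 0 := by
      intro x
      simp [hKdef, Submodule.mem_inf, LinearMap.mem_ker, LieAlgebra.ad_apply, and_assoc]
    have hKle : K ≤ p := inf_le_left
    set F : L →ₗ[ℂ] L × L :=
      LinearMap.prod (LieAlgebra.ad ℂ L u) (LieAlgebra.ad ℂ L v) with hFdef
    set Φ : ↥p →ₗ[ℂ] L × L := F.domRestrict p with hΦdef
    have hker : LinearMap.ker Φ = K.comap p.subtype := by
      ext x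
      rw [LinearMap.mem_ker, Submodule.mem_comap]
      rw [hKmem]
      simp only [hΦdef, hFdef, LinearMap.domRestrict_apply, LinearMap.prod_apply,
        Function.prod, Prod.mk_eq_zero, LieAlgebra.ad_apply, Submodule.coe_subtype]
      exact ⟨fun h => ⟨x.2, h⟩, fun h => h.2⟩
    have e1 : Module.finrank ℂ (LinearMap.ker Φ) = Module.finrank ℂ K := by
      rw [hker]
      exact (Submodule.comapSubtypeEquivOfLe hKle).finrank_eq
    have hrange : LinearMap.range Φ ≤ (Submodule.span ℂ {c}).prod (Submodule.span ℂ {c}) := by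
      rintro z ⟨x, rfl⟩
      rw [Submodule.mem_prod]
      constructor
      · obtain ⟨s, hs⟩ := hbrs u hu (x : L) x.2
        exact Submodule.mem_span_singleton.mpr ⟨s, hs.symm⟩
      · obtain ⟨s, hs⟩ := hbrs v hv (x : L) x.2
        exact Submodule.mem_span_singleton.mpr ⟨s, hs.symm⟩
    have hprfr : Module.finrank ℂ
        ((Submodule.span ℂ {c}).prod (Submodule.span ℂ {c}) : Submodule ℂ (L × L)) ≤ 2 := by
      rw [LinearMap.prod_eq_sup_map]
      have h1 := Submodule.finrank_sup_add_finrank_inf_eq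
        ((Submodule.span ℂ {c}).map (LinearMap.inl ℂ L L))
        ((Submodule.span ℂ {c}).map (LinearMap.inr ℂ L L))
      have h2 := Submodule.finrank_map_le (LinearMap.inl ℂ L L) (Submodule.span ℂ {c})
      have h3 := Submodule.finrank_map_le (LinearMap.inr ℂ L L) (Submodule.span ℂ {c})
      have h4 : Module.finrank ℂ (Submodule.span ℂ {c}) = 1 := finrank_span_singleton hc
      omega
    have hrangefr : Module.finrank ℂ (LinearMap.range Φ) ≤ 2 :=
      le_trans (Submodule.finrank_mono hrange) hprfr
    have hrn := LinearMap.finrank_range_add_finrank_ker Φ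
    rw [hdim] at hrn
    have hKge : 2 ≤ Module.finrank ℂ K := by omega
    -- upper bound on finrank K
    have hli2 : LinearIndependent ℂ ![u, v] := by
      rw [LinearIndependent.pair_iff]
      intro s t hst
      have h0 : s = 0 := by
        have h := congrArg (fun z => ⁅z, v⁆) hst
        simp only [add_lie, smul_lie, lie_self, smul_zero, zero_lie, add_zero] at h
        rcases smul_eq_zero.mp h with h' | h'
        · exact h'
        · exact absurd h' hc
      have h1 : t = 0 := by
        have h := congrArg (fun z => ⁅z, u⁆) hst
        simp only [add_lie, smul_lie, lie_self, smul_zero, zero_lie, zero_add,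
          hvu, smul_neg] at h
        rcases smul_eq_zero.mp (neg_eq_zero.mp h) with h' | h'
        · exact h'
        · exact absurd h' hc
      exact ⟨h0, h1⟩
    set S2 : Submodule ℂ L := Submodule.span ℂ (Set.range ![u, v]) with hS2def
    have hS2le : S2 ≤ p := by
      rw [hS2def, Submodule.span_le]
      rintro z ⟨i, rfl⟩
      fin_cases i
      · exact hu
      · exact hv
    have hfrS2 : Module.finrank ℂ S2 = 2 := by
      rw [hS2def, finrank_span_eq_card hli2]
      simp
    have hKS2 : K ⊓ S2 = ⊥ := by
      rw [eq_bot_iff]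
      intro z hz
      rw [Submodule.mem_inf] at hz
      obtain ⟨hzK, hzS2⟩ := hz
      rw [hKmem] at hzK
      obtain ⟨hzp, huz, hvz⟩ := hzK
      rw [hS2def] at hzS2
      rw [Submodule.mem_span_range_iff_exists_fun ℂ] at hzS2
      obtain ⟨g, hg⟩ := hzS2
      rw [Fin.sum_univ_two] at hg
      simp only [Matrix.cons_val_zero, Matrix.cons_val_one, Matrix.head_cons] at hg
      have hg1 : g 1 = 0 := by
        have h := huz
        rw [← hg] at h
        simp only [lie_add, lie_smul, lie_self, smul_zero, zero_add] at h
        rcases smul_eq_zero.mp h with h' | h'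
        · exact h'
        · exact absurd h' hc
      have hg0 : g 0 = 0 := by
        have h := hvz
        rw [← hg] at h
        simp only [lie_add, lie_smul, lie_self, smul_zero, add_zero, hvu, smul_neg] at h
        rcases smul_eq_zero.mp (neg_eq_zero.mp h) with h' | h'
        · exact h'
        · exact absurd h' hc
      have : z = 0 := by rw [← hg, hg0, hg1, zero_smul, zero_smul, add_zero]
      simp [this]
    have hsupfr := Submodule.finrank_sup_add_finrank_inf_eq K S2
    rw [hKS2, hfrS2] at hsupfr
    have hsuple : Module.finrank ℂ (K ⊔ S2 : Submodule ℂ L) ≤ 4 := by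
      rw [← hdim]
      exact Submodule.finrank_mono (sup_le hKle hS2le)
    have hfrbot : Module.finrank ℂ (⊥ : Submodule ℂ L) = 0 := finrank_bot ℂ L
    have hKfr : Module.finrank ℂ K = 2 := by omega
    -- pick x ∈ K outside span{w}
    have hnotle : ¬ K ≤ Submodule.span ℂ {w} := by
      intro hle
      have h := Submodule.finrank_mono hle
      rw [finrank_span_singleton hw0] at h
      omega
    obtain ⟨x, hxK, hxw⟩ := SetLike.not_le_iff_exists.mp hnotle
    obtain ⟨hxp, hux, hvx⟩ := (hKmem x).mp hxK
    have hxu : ⁅x, u⁆ = 0 := by rw [← lie_skew, hux, neg_zero]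
    have hxv : ⁅x, v⁆ = 0 := by rw [← lie_skew, hvx, neg_zero]
    have hwK : w ∈ K := (hKmem w).mpr ⟨hwp, hzw u hu, hzw v hv⟩
    have hliwx : LinearIndependent ℂ ![w, x] := by
      rw [LinearIndependent.pair_iff]
      intro s t hst
      have ht : t = 0 := by
        by_contra ht
        apply hxw
        have hx' : t • x = (-s) • w := by
          rw [neg_smul]
          rw [add_comm] at hst
          exact eq_neg_of_add_eq_zero_left hst
        have : x = (t⁻¹ * (-s)) • w := by
          rw [← smul_smul, ← hx', inv_smul_smul₀ ht]
        exact Submodule.mem_span_singleton.mpr ⟨t⁻¹ * (-s), this.symm⟩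
      refine ⟨?_, ht⟩
      rw [ht, zero_smul, add_zero] at hst
      rcases smul_eq_zero.mp hst with h' | h'
      · exact h'
      · exact absurd h' hw0
    set WX : Submodule ℂ L := Submodule.span ℂ (Set.range ![w, x]) with hWXdef
    have hWXle : WX ≤ K := by
      rw [hWXdef, Submodule.span_le]
      rintro z ⟨i, rfl⟩
      fin_cases i
      · exact hwK
      · exact hxK
    have hfrWX : Module.finrank ℂ WX = 2 := by
      rw [hWXdef, finrank_span_eq_card hliwx]
      simp
    have hKWX : WX = K :=
      Submodule.eq_of_le_of_finrank_le hWXle (le_of_eq (hKfr.trans hfrWX.symm))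
    have hxrad : ∀ y ∈ p, ⁅x, y⁆ = 0 := by
      intro y hy
      obtain ⟨α, hα⟩ := hbrs u hu y hy
      obtain ⟨β, hβ⟩ := hbrs v hv y hy
      have hy'K : (y + β • u - α • v) ∈ K := by
        rw [hKmem]
        refine ⟨Submodule.sub_mem _ (Submodule.add_mem _ hy (Submodule.smul_mem _ _ hu))
          (Submodule.smul_mem _ _ hv), ?_, ?_⟩
        · rw [lie_sub, lie_add, lie_smul, lie_smul, lie_self, smul_zero, add_zero, hα]
          rw [sub_self]
        · rw [lie_sub, lie_add, lie_smul, lie_smul, lie_self, smul_zero, sub_zero, hβ, hvu]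
          rw [smul_neg, add_neg_cancel]
      have hy'WX : (y + β • u - α • v) ∈ WX := by rw [hKWX]; exact hy'K
      rw [hWXdef, Submodule.mem_span_range_iff_exists_fun ℂ] at hy'WX
      obtain ⟨g, hg⟩ := hy'WX
      rw [Fin.sum_univ_two] at hg
      simp only [Matrix.cons_val_zero, Matrix.cons_val_one, Matrix.head_cons] at hg
      have hy2 : y = g 0 • w + g 1 • x - β • u + α • v := by
        rw [hg]; module
      rw [hy2, lie_add, lie_sub, lie_add, lie_smul, lie_smul, lie_smul, lie_smul,
        lie_self, hxu, hxv, hzw x hxp]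
      simp
    obtain ⟨d, hd⟩ := hradw x hxp hxrad
    exact hxw (Submodule.mem_span_singleton.mpr ⟨d, hd.symm⟩)
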